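/- Let A be an m×n real matrix. There is no y ∈ ℝ^m with yᵀA ≥ 0ᵀ and yᵀA ≠ 0ᵀ if and only if there exists x ∈ ℝ^n with Ax = 0 and x > 0 (all components strictly positive). -/

import Mathlib

open scoped Matrix

theorem stiemke (m n : ℕ) (A : Matrix (Fin m) (Fin n) ℝ) :
    (¬ ∃ y : Fin m → ℝ, 0 ≤ A.vecMul y ∧ A.vecMul y ≠ 0) ↔
    (∃ x : Fin n → ℝ, A.mulVec x = 0 ∧ ∀ j, 0 < x j) := by
  constructor
  · intro h
    -- Separate the standard simplex from the row space.
    set R : Submodule ℝ (Fin n → ℝ) :=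
      LinearMap.range (Matrix.vecMulLinear A) with hR
    have hdisj : Disjoint (stdSimplex ℝ (Fin n)) (R : Set (Fin n → ℝ)) := by
      rw [Set.disjoint_left]
      rintro z ⟨hz0, hz1⟩ ⟨y, rfl⟩
      simp only [Matrix.vecMulLinear_apply] at hz0 hz1
      exact h ⟨y, fun j => hz0 j, by
        intro hzero
        have : (1 : ℝ) = 0 := by
          rw [← hz1, hzero]; simp
        norm_num at this⟩
    obtain ⟨f, u, v, hfu, huv, hfv⟩ :=
      geometric_hahn_banach_compact_closed (convex_stdSimplex ℝ _)
        (isCompact_stdSimplex ℝ _) R.convex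
        (Submodule.closed_of_finiteDimensional R) hdisj
    -- f vanishes on R
    have hf0 : ∀ z ∈ R, f z = 0 := by
      intro z hz
      by_contra hne
      have := hfv (((v - 1) / f z) • z) (R.smul_mem _ hz)
      rw [map_smul, smul_eq_mul, div_mul_cancel₀ _ hne] at this
      linarith
    have hv0 : v < 0 := by
      have := hfv 0 R.zero_mem
      simpa using this
    refine ⟨fun j => -(f (Pi.single j 1)), ?_, ?_⟩
    · -- Ax = 0
      funext i
      have key : ∀ y : Fin m → ℝ, y ⬝ᵥ A.mulVec (fun j => -(f (Pi.single j 1))) = 0 := by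
        intro y
        have hmem : A.vecMul y ∈ R := ⟨y, rfl⟩
        have hfz := hf0 _ hmem
        have hrep : f (A.vecMul y) = ∑ j, (A.vecMul y) j * f (Pi.single j 1) := by
          have hsingle : ∀ j : Fin n, (fun j1 => if j = j1 then (1:ℝ) else 0) =
              Pi.single j 1 := by
            intro j; funext k; simp [Pi.single_apply, eq_comm]
          conv_lhs => rw [pi_eq_sum_univ (A.vecMul y)]
          rw [map_sum]
          refine Finset.sum_congr rfl fun j _ => ?_
          rw [map_smul, smul_eq_mul, hsingle j]
        rw [Matrix.dotProduct_mulVec]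
        rw [hrep] at hfz
        simp only [dotProduct, mul_neg]
        rw [Finset.sum_neg_distrib, neg_eq_zero]
        exact hfz
      have := key (Pi.single i 1)
      rw [single_dotProduct] at this
      simpa using this
    · intro j
      have hmem : Pi.single j 1 ∈ stdSimplex ℝ (Fin n) := by
        constructor
        · intro k
          classical
          rcases eq_or_ne k j with rfl | hk
          · simp
          · simp [Pi.single_apply, hk]
        · simp
      have := hfu _ hmem
      show 0 < -(f (Pi.single j 1))
      linarith
  · rintro ⟨x, hAx, hx⟩ ⟨y, hy0, hyne⟩
    have hdot : A.vecMul y ⬝ᵥ x = 0 := by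
      rw [← Matrix.dotProduct_mulVec, hAx, dotProduct_zero]
    -- but the dot product is positive
    obtain ⟨j, hj⟩ : ∃ j, A.vecMul y j ≠ 0 := by
      by_contra hc
      push_neg at hc
      exact hyne (funext hc)
    have hjpos : 0 < A.vecMul y j := lt_of_le_of_ne (hy0 j) (Ne.symm hj)
    have : 0 < A.vecMul y ⬝ᵥ x := by
      rw [dotProduct]
      apply Finset.sum_pos'
      · intro k _
        exact mul_nonneg (hy0 k) (hx k).le
      · exact ⟨j, Finset.mem_univ j, mul_pos hjpos (hx j)⟩
    linarith
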